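/- For all integers 0 ≤ k ≤ j, the following identity holds in ℚ(q): ∑_{h=0}^{k} (−q)^h q^{h² + 2h(j−k)} [j−h; k−h]_+ [j; h]_+ = (q^{2+2j−2k}; q²)_k [j; k]_+. (This is the product form of the rescaled right twist rule applied to the basis webs OP[j,k] and RI[j,k].) -/

import Mathlib

noncomputable section

open Finset

/-- The field `ℚ(q)` of rational functions in one variable. -/
abbrev F : Type := RatFunc ℚ

/-- The variable `q`. -/
def q : F := RatFunc.X

/-- The q-Pochhammer symbol `(x; y)_n = ∏_{j=0}^{n-1} (1 - x yʲ)`. -/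
def qPoch (x y : F) (n : ℕ) : F := ∏ i ∈ Finset.range n, (1 - x * y ^ i)

/-- `(q²;q²)_m = ∏_{i=1}^{m} (1 - q^{2i})`. -/
def qp (m : ℕ) : F := qPoch (q ^ 2) (q ^ 2) m

/-- The positive quantum binomial coefficient `[N; k]₊`. -/
def qbin (N k : ℕ) : F := qp N / (qp k * qp (N - k))

lemma q_pow_ne_one (n : ℕ) (hn : n ≠ 0) : q ^ n ≠ 1 := by
  intro h
  have : (Polynomial.X : Polynomial ℚ) ^ n = 1 := by
    apply RatFunc.algebraMap_injective ℚ
    simpa [q, RatFunc.algebraMap_X, map_pow] using h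
  have := congrArg Polynomial.natDegree this
  simp [Polynomial.natDegree_X_pow] at this
  exact hn this

lemma one_sub_q_pow_ne_zero (n : ℕ) (hn : n ≠ 0) : (1 : F) - q ^ n ≠ 0 := by
  intro h
  exact q_pow_ne_one n hn (by linear_combination -h)

lemma qp_succ (m : ℕ) : qp (m + 1) = qp m * (1 - q ^ (2 * m + 2)) := by
  simp only [qp, qPoch, Finset.prod_range_succ]
  ring_nf

lemma qp_zero : qp 0 = 1 := by simp [qp, qPoch]

lemma qp_ne_zero (m : ℕ) : qp m ≠ 0 := by
  induction m with
  | zero => simp [qp_zero]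
  | succ n ih =>
      rw [qp_succ]
      exact mul_ne_zero ih (one_sub_q_pow_ne_zero _ (by omega))

lemma qbin_zero (N : ℕ) : qbin N 0 = 1 := by
  simp [qbin, qp_zero, div_self (qp_ne_zero N)]

lemma qbin_self (N : ℕ) : qbin N N = 1 := by
  simp [qbin, qp_zero, div_self (qp_ne_zero N)]

/-- extended q-binomial -/
def qbin' (N k : ℕ) : F := if k ≤ N then qbin N k else 0

lemma qbin'_eq (N k : ℕ) (h : k ≤ N) : qbin' N k = qbin N k := if_pos h

/-- Pascal rule. -/
lemma pascal (N h : ℕ) (hh : h ≤ N) :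
    qbin' (N + 1) (h + 1) = qbin' N (h + 1) + q ^ (2 * (N - h)) * qbin' N h := by
  rcases eq_or_lt_of_le hh with rfl | hlt
  · simp [qbin', qbin_self, Nat.lt_irrefl, Nat.sub_self]
  · obtain ⟨d, rfl⟩ : ∃ d, N = h + d + 1 := ⟨N - h - 1, by omega⟩
    rw [qbin'_eq _ _ (by omega), qbin'_eq _ _ (by omega), qbin'_eq _ _ (by omega)]
    simp only [qbin]
    have e1 : h + d + 1 + 1 - (h + 1) = d + 1 := by omega
    have e2 : h + d + 1 - (h + 1) = d := by omega
    have e3 : h + d + 1 - h = d + 1 := by omega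
    have e4 : h + d + 1 - h - 1 = d := by omega
    rw [e1, e2, e3]
    rw [show h + d + 1 + 1 = (h + d + 1) + 1 from rfl, qp_succ (h + d + 1),
        qp_succ d, show h + 1 = h + 1 from rfl, qp_succ h]
    have h1 := qp_ne_zero h
    have h2 := qp_ne_zero d
    have h3 := qp_ne_zero (h + d + 1)
    have h4 := one_sub_q_pow_ne_zero (2 * d + 2) (by omega)
    have h5 := one_sub_q_pow_ne_zero (2 * h + 2) (by omega)
    have e5 : h + d + 1 - h = d + 1 := by omega
    field_simp
    ring_nf

lemma qbin'_big (N k : ℕ) (h : N < k) : qbin' N k = 0 := if_neg (by omega)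

lemma core (m k : ℕ) :
    ∑ h ∈ Finset.range (k + 1), (-q) ^ h * q ^ (h ^ 2 + 2 * h * m) * qbin' k h =
      qPoch (q ^ (2 + 2 * m)) (q ^ 2) k := by
  induction k with
  | zero => simp [qbin', qbin_self, qPoch]
  | succ k ih =>
    set g : ℕ → F := fun h => (-q) ^ h * q ^ (h ^ 2 + 2 * h * m) * qbin' k h with hg
    have key : ∀ h ∈ Finset.range (k + 1),
        (-q) ^ (h+1) * q ^ ((h+1) ^ 2 + 2 * (h+1) * m) * qbin' (k+1) (h+1)
          = g (h+1) + -(q ^ (2 + 2 * m + 2 * k)) * g h := by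
      intro h hh
      rw [Finset.mem_range] at hh
      rw [pascal k h (by omega), mul_add, hg]
      congr 1
      obtain ⟨d, rfl⟩ : ∃ d, k = h + d := ⟨k - h, by omega⟩
      have e : h + d - h = d := by omega
      rw [e]
      ring
    rw [Finset.sum_range_succ' _ (k + 1), Finset.sum_congr rfl key,
        Finset.sum_add_distrib, ← Finset.mul_sum]
    have h1 : ∑ h ∈ Finset.range (k + 1), g (h + 1) =
        (∑ h ∈ Finset.range (k + 1), g h) - g 0 := by
      have := Finset.sum_range_succ' g (k + 1)
      have h2 : ∑ h ∈ Finset.range (k + 2), g h =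
          (∑ h ∈ Finset.range (k + 1), g h) + g (k + 1) := Finset.sum_range_succ g (k + 1)
      have h3 : g (k + 1) = 0 := by simp [hg, qbin'_big k (k+1) (by omega)]
      rw [h2, h3] at this
      linear_combination -this
    have g0 : g 0 = 1 := by simp [hg, qbin'_eq, qbin_zero]
    have f0' : (-q) ^ 0 * q ^ (0 ^ 2 + 2 * 0 * m) * qbin' (k+1) 0 = 1 := by
      simp [qbin'_eq, qbin_zero]
    have hp : q ^ (2 + 2 * m) * (q ^ 2) ^ k = q ^ (2 + 2 * m + 2 * k) := by
      rw [← pow_mul, ← pow_add]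
    rw [h1, show qPoch (q ^ (2 + 2 * m)) (q ^ 2) (k + 1)
        = qPoch (q ^ (2 + 2 * m)) (q ^ 2) k * (1 - q ^ (2 + 2 * m) * (q ^ 2) ^ k)
        from Finset.prod_range_succ _ _, hp]
    linear_combination (1 - q ^ (2 + 2 * m + 2 * k)) * ih - g0 + f0'

lemma qbin_mul (j k h : ℕ) (hh : h ≤ k) (hk : k ≤ j) :
    qbin (j - h) (k - h) * qbin j h = qbin j k * qbin k h := by
  obtain ⟨a, rfl⟩ : ∃ a, k = h + a := ⟨k - h, by omega⟩
  obtain ⟨b, rfl⟩ : ∃ b, j = h + a + b := ⟨j - (h + a), by omega⟩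
  simp only [qbin]
  have e1 : h + a + b - h = a + b := by omega
  have e2 : h + a - h = a := by omega
  have e3 : a + b - a = b := by omega
  have e4 : h + a + b - (h + a) = b := by omega
  rw [e1, e2, e3, e4]
  field_simp [qp_ne_zero]

/-- Product form of the rescaled right twist rule on `OP[j,k]` and `RI[j,k]`:
`∑_{h=0}^{k} (−q)^h q^{h²+2h(j−k)} [j−h;k−h]₊ [j;h]₊ = (q^{2+2j−2k};q²)_k [j;k]₊`. -/
theorem product_form_R_OP_RI (j k : ℕ) (hk : k ≤ j) :
    ∑ h ∈ Finset.range (k + 1),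
      (-q) ^ h * q ^ (h ^ 2 + 2 * h * (j - k)) * qbin (j - h) (k - h) * qbin j h =
      qPoch (q ^ (2 + 2 * (j - k))) (q ^ 2) k * qbin j k := by
  have hc : ∀ h ∈ Finset.range (k + 1),
      (-q) ^ h * q ^ (h ^ 2 + 2 * h * (j - k)) * qbin (j - h) (k - h) * qbin j h
        = qbin j k * ((-q) ^ h * q ^ (h ^ 2 + 2 * h * (j - k)) * qbin' k h) := by
    intro h hh
    rw [Finset.mem_range] at hh
    rw [qbin'_eq _ _ (by omega)]
    linear_combination ((-q) ^ h * q ^ (h ^ 2 + 2 * h * (j - k))) * qbin_mul j k h (by omega) hk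
  rw [Finset.sum_congr rfl hc, ← Finset.mul_sum, core (j - k) k, mul_comm]
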